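/- Let ℓ_1, ..., ℓ_n : ℝ^d → ℝ be convex functions and let 0 ≤ σ_1 ≤ ... ≤ σ_n with Σ_{i=1}^n σ_i = 1. Then the spectral risk R_σ(w) := Σ_{i=1}^n σ_i ℓ_{(i)}(w) is convex, and its subdifferential at any w ∈ ℝ^d equals ∂R_σ(w) = conv( ⋃_{π ∈ argsort(ℓ(w))} Σ_{i=1}^n σ_i ∂ℓ_{π(i)}(w) ), where argsort(ℓ(w)) := {π a permutation of {1,...,n} : ℓ_{π(1)}(w) ≤ ... ≤ ℓ_{π(n)}(w)}, the inner sum is a Minkowski sum of sets, and conv denotes the convex hull. Moreover, if each ℓ_i is G-Lipschitz continuous, then R_σ is G-Lipschitz continuous. -/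

import Mathlib

open scoped RealInnerProductSpace NNReal

/-- The convex-analytic subdifferential of `f : ℝ^d → ℝ` at `w`. -/
def subdiff {d : ℕ} (f : EuclideanSpace ℝ (Fin d) → ℝ) (w : EuclideanSpace ℝ (Fin d)) :
    Set (EuclideanSpace ℝ (Fin d)) :=
  {g | ∀ v, f w + ⟪g, v - w⟫ ≤ f v}

/-- The set of sorting permutations of the losses at `w`:
`argsort(ℓ(w)) = {π : ℓ_{π(1)}(w) ≤ ⋯ ≤ ℓ_{π(n)}(w)}`. -/
def argsortSet {d n : ℕ} (ℓ : Fin n → EuclideanSpace ℝ (Fin d) → ℝ)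
    (w : EuclideanSpace ℝ (Fin d)) : Set (Equiv.Perm (Fin n)) :=
  {π | Monotone fun i => ℓ (π i) w}

/-- The spectral risk `R_σ(w) = ∑ᵢ σᵢ ℓ₍ᵢ₎(w)`, with the losses evaluated at `w` sorted in
non-decreasing order via `Tuple.sort`. -/
noncomputable def spectralRisk {d n : ℕ} (σ : Fin n → ℝ)
    (ℓ : Fin n → EuclideanSpace ℝ (Fin d) → ℝ) (w : EuclideanSpace ℝ (Fin d)) : ℝ :=
  ∑ i, σ i * ℓ (Tuple.sort (fun j => ℓ j w) i) w

section SpectralAux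

open Set Filter

variable {d n : ℕ}

/-! ### Directional derivatives of convex functions -/

/-- The difference quotient (slope) of `f` at `w` in direction `u` with step `t`. -/
noncomputable def slp (f : EuclideanSpace ℝ (Fin d) → ℝ) (w u : EuclideanSpace ℝ (Fin d))
    (t : ℝ) : ℝ := (f (w + t • u) - f w) / t

/-- The (lower) directional derivative of `f` at `w` in direction `u`. -/
noncomputable def dder (f : EuclideanSpace ℝ (Fin d) → ℝ) (w u : EuclideanSpace ℝ (Fin d)) : ℝ :=
  sInf (slp f w u '' Set.Ioi 0)

lemma convexOn_line {f : EuclideanSpace ℝ (Fin d) → ℝ} (hf : ConvexOn ℝ Set.univ f)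
    (w u : EuclideanSpace ℝ (Fin d)) :
    ConvexOn ℝ Set.univ (fun t : ℝ => f (w + t • u)) := by
  have h := hf.comp_affineMap (AffineMap.lineMap w (w + u))
  simp only [Set.preimage_univ] at h
  refine h.congr fun t _ => ?_
  simp [AffineMap.lineMap_apply, add_comm]

lemma slp_mono {f : EuclideanSpace ℝ (Fin d) → ℝ} (hf : ConvexOn ℝ Set.univ f)
    (w u : EuclideanSpace ℝ (Fin d)) {s t : ℝ}
    (hs : 0 < s) (hst : s ≤ t) : slp f w u s ≤ slp f w u t := by
  have h := (convexOn_line hf w u).secant_mono (a := 0) (x := s) (y := t)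
    (Set.mem_univ _) (Set.mem_univ _) (Set.mem_univ _) hs.ne' (hs.trans_le hst).ne' hst
  simpa [slp] using h

lemma slp_bddBelow {f : EuclideanSpace ℝ (Fin d) → ℝ} (hf : ConvexOn ℝ Set.univ f)
    (w u : EuclideanSpace ℝ (Fin d)) {t : ℝ} (ht : 0 < t) :
    f w - f (w + (-1 : ℝ) • u) ≤ slp f w u t := by
  have h := (convexOn_line hf w u).secant_mono (a := 0) (x := (-1 : ℝ)) (y := t)
    (Set.mem_univ _) (Set.mem_univ _) (Set.mem_univ _) (by norm_num) ht.ne' (by linarith)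
  simp only [sub_zero, zero_smul, add_zero] at h
  calc f w - f (w + (-1 : ℝ) • u) = (f (w + (-1:ℝ) • u) - f w) / (-1 : ℝ) := by ring
  _ ≤ slp f w u t := h

lemma bddBelow_slp {f : EuclideanSpace ℝ (Fin d) → ℝ} (hf : ConvexOn ℝ Set.univ f)
    (w u : EuclideanSpace ℝ (Fin d)) :
    BddBelow (slp f w u '' Set.Ioi 0) := by
  refine ⟨f w - f (w + (-1 : ℝ) • u), ?_⟩
  rintro _ ⟨t, ht, rfl⟩
  exact slp_bddBelow hf w u ht

lemma dder_le_slp {f : EuclideanSpace ℝ (Fin d) → ℝ} (hf : ConvexOn ℝ Set.univ f)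
    (w u : EuclideanSpace ℝ (Fin d)) {t : ℝ} (ht : 0 < t) :
    dder f w u ≤ slp f w u t :=
  csInf_le (bddBelow_slp hf w u) ⟨t, ht, rfl⟩

lemma le_dder {f : EuclideanSpace ℝ (Fin d) → ℝ} {w u : EuclideanSpace ℝ (Fin d)} {c : ℝ}
    (h : ∀ t : ℝ, 0 < t → c ≤ slp f w u t) :
    c ≤ dder f w u :=
  le_csInf (Set.Nonempty.image _ ⟨1, Set.mem_Ioi.mpr one_pos⟩)
    (by rintro _ ⟨t, ht, rfl⟩; exact h t ht)

lemma exists_slp_lt (f : EuclideanSpace ℝ (Fin d) → ℝ) (w u : EuclideanSpace ℝ (Fin d)) {ε : ℝ}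
    (hε : 0 < ε) :
    ∃ t : ℝ, 0 < t ∧ slp f w u t < dder f w u + ε := by
  have h : sInf (slp f w u '' Set.Ioi 0) < dder f w u + ε := lt_add_of_pos_right _ hε
  obtain ⟨_, ⟨t, ht, rfl⟩, hlt⟩ := exists_lt_of_csInf_lt
    (Set.Nonempty.image _ ⟨1, Set.mem_Ioi.mpr one_pos⟩) h
  exact ⟨t, ht, hlt⟩

lemma dder_zero (f : EuclideanSpace ℝ (Fin d) → ℝ) (w : EuclideanSpace ℝ (Fin d)) :
    dder f w 0 = 0 := by
  have h : slp f w 0 '' Set.Ioi 0 = {0} := by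
    ext x
    constructor
    · rintro ⟨t, ht, rfl⟩; simp [slp]
    · rintro rfl; exact ⟨1, Set.mem_Ioi.mpr one_pos, by simp [slp]⟩
  rw [dder, h, csInf_singleton]

lemma dder_smul_pos {f : EuclideanSpace ℝ (Fin d) → ℝ} (hf : ConvexOn ℝ Set.univ f)
    (w u : EuclideanSpace ℝ (Fin d)) {c : ℝ} (hc : 0 < c) :
    dder f w (c • u) = c * dder f w u := by
  have key : ∀ t : ℝ, 0 < t → slp f w (c • u) t = c * slp f w u (t * c) := by
    intro t ht
    have h1 : w + t • c • u = w + (t * c) • u := by rw [smul_smul]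
    rw [slp, slp, h1]
    field_simp
  apply le_antisymm
  · have h : ∀ t : ℝ, 0 < t → dder f w (c • u) ≤ c * slp f w u t := by
      intro t ht
      have h2 := dder_le_slp hf w (c • u) (t := t / c) (div_pos ht hc)
      rw [key _ (div_pos ht hc), div_mul_cancel₀ _ hc.ne'] at h2
      exact h2
    have h3 : dder f w (c • u) / c ≤ dder f w u := by
      apply le_dder
      intro t ht
      rw [div_le_iff₀ hc, mul_comm]
      exact h t ht
    calc dder f w (c • u) = c * (dder f w (c • u) / c) := by field_simp
    _ ≤ c * dder f w u := mul_le_mul_of_nonneg_left h3 hc.le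
  · apply le_dder
    intro t ht
    rw [key t ht]
    exact mul_le_mul_of_nonneg_left (dder_le_slp hf w u (mul_pos ht hc)) hc.le

lemma dder_add_le {f : EuclideanSpace ℝ (Fin d) → ℝ} (hf : ConvexOn ℝ Set.univ f)
    (w u v : EuclideanSpace ℝ (Fin d)) :
    dder f w (u + v) ≤ dder f w u + dder f w v := by
  apply le_of_forall_pos_le_add
  intro ε hε
  obtain ⟨t₁, ht₁, h₁⟩ := exists_slp_lt f w u (half_pos hε)
  obtain ⟨t₂, ht₂, h₂⟩ := exists_slp_lt f w v (half_pos hε)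
  set t := min t₁ t₂ with htdef
  have ht : 0 < t := lt_min ht₁ ht₂
  have hmid : slp f w (u + v) (t / 2) ≤ slp f w u t + slp f w v t := by
    have hcvx := hf.2 (Set.mem_univ (w + t • u)) (Set.mem_univ (w + t • v))
      (by norm_num : (0:ℝ) ≤ 1/2) (by norm_num : (0:ℝ) ≤ 1/2) (by norm_num)
    have hpt : (1/2 : ℝ) • (w + t • u) + (1/2 : ℝ) • (w + t • v) = w + (t/2) • (u + v) := by
      module
    rw [hpt] at hcvx
    simp only [smul_eq_mul] at hcvx
    rw [slp, slp, slp, ← add_div, div_le_div_iff₀ (by linarith) ht]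
    nlinarith [hcvx, ht]
  calc dder f w (u + v) ≤ slp f w (u + v) (t / 2) := dder_le_slp hf w _ (by linarith)
  _ ≤ slp f w u t + slp f w v t := hmid
  _ ≤ slp f w u t₁ + slp f w v t₂ :=
      add_le_add (slp_mono hf w u ht (min_le_left _ _)) (slp_mono hf w v ht (min_le_right _ _))
  _ ≤ dder f w u + ε/2 + (dder f w v + ε/2) := add_le_add h₁.le h₂.le
  _ = dder f w u + dder f w v + ε := by ring

/-! ### Subdifferential vs directional derivative -/

lemma inner_le_dder {f : EuclideanSpace ℝ (Fin d) → ℝ} {w g : EuclideanSpace ℝ (Fin d)}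
    (hg : g ∈ subdiff f w) (u : EuclideanSpace ℝ (Fin d)) :
    ⟪g, u⟫ ≤ dder f w u := by
  apply le_dder
  intro t ht
  have h := hg (w + t • u)
  rw [add_sub_cancel_left, real_inner_smul_right] at h
  rw [slp, le_div_iff₀ ht]
  linarith

lemma mem_subdiff_of_le_dder {f : EuclideanSpace ℝ (Fin d) → ℝ} (hf : ConvexOn ℝ Set.univ f)
    {w g : EuclideanSpace ℝ (Fin d)}
    (h : ∀ u, ⟪g, u⟫ ≤ dder f w u) : g ∈ subdiff f w := by
  intro v
  have h1 := (h (v - w)).trans (dder_le_slp hf w (v - w) one_pos)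
  simp only [slp, one_smul, div_one, add_sub_cancel] at h1
  linarith

lemma exists_subdiff_inner_eq {f : EuclideanSpace ℝ (Fin d) → ℝ} (hf : ConvexOn ℝ Set.univ f)
    (w u : EuclideanSpace ℝ (Fin d)) :
    ∃ g ∈ subdiff f w, ⟪g, u⟫ = dder f w u := by
  have hneg : -dder f w (-u) ≤ dder f w u := by
    have h0 := dder_add_le hf w u (-u)
    rw [add_neg_cancel, dder_zero] at h0
    linarith
  have H : ∀ c : ℝ, c • u = 0 → c • dder f w u = 0 := by
    intro c hc
    rcases smul_eq_zero.mp hc with h | h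
    · rw [h, zero_smul]
    · rw [h, dder_zero, smul_zero]
  set pm := LinearPMap.mkSpanSingleton' (σ := RingHom.id ℝ) u (dder f w u) H with hpm
  have hdom : ∀ x : pm.domain, pm x ≤ dder f w x := by
    rintro ⟨x, hx⟩
    obtain ⟨c, hc⟩ := Submodule.mem_span_singleton.mp hx
    subst hc
    rw [LinearPMap.mkSpanSingleton'_apply]
    show c • dder f w u ≤ dder f w (c • u)
    rcases lt_trichotomy c 0 with h | h | h
    · have h1 : c • u = (-c) • (-u) := by module
      rw [h1, dder_smul_pos hf w (-u) (by linarith)]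
      have := mul_le_mul_of_nonneg_left hneg (by linarith : (0:ℝ) ≤ -c)
      simp only [smul_eq_mul]
      nlinarith
    · subst h; simp [dder_zero]
    · rw [dder_smul_pos hf w u h]; simp [smul_eq_mul]
  obtain ⟨glin, hext, hle⟩ := exists_extension_of_le_sublinear pm (dder f w)
    (fun c hc x => dder_smul_pos hf w x hc) (dder_add_le hf w) hdom
  have hgu : glin u = dder f w u := by
    have := hext ⟨u, Submodule.mem_span_singleton_self u⟩
    exact this.trans (LinearPMap.mkSpanSingleton'_apply_self (σ := RingHom.id ℝ) u (dder f w u) H _)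
  set g : EuclideanSpace ℝ (Fin d) :=
    (InnerProductSpace.toDual ℝ (EuclideanSpace ℝ (Fin d))).symm
      (LinearMap.toContinuousLinearMap glin) with hgdef
  have hg : ∀ x, ⟪g, x⟫ = glin x := by
    intro x
    rw [hgdef, InnerProductSpace.toDual_symm_apply]
    rfl
  refine ⟨g, mem_subdiff_of_le_dder hf fun x => ?_, by rw [hg, hgu]⟩
  rw [hg]; exact hle x

lemma subdiff_nonempty {f : EuclideanSpace ℝ (Fin d) → ℝ} (hf : ConvexOn ℝ Set.univ f)
    (w : EuclideanSpace ℝ (Fin d)) : (subdiff f w).Nonempty := by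
  obtain ⟨g, hg, -⟩ := exists_subdiff_inner_eq hf w 0
  exact ⟨g, hg⟩

/-! ### Topological properties of the subdifferential -/

lemma convexOn_continuous {f : EuclideanSpace ℝ (Fin d) → ℝ} (hf : ConvexOn ℝ Set.univ f) :
    Continuous f := by
  have := hf.continuousOn isOpen_univ
  rwa [continuousOn_univ] at this

lemma subdiff_convex (f : EuclideanSpace ℝ (Fin d) → ℝ) (w : EuclideanSpace ℝ (Fin d)) :
    Convex ℝ (subdiff f w) := by
  intro g₁ hg₁ g₂ hg₂ a b ha hb hab
  intro v
  have h1 := hg₁ v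
  have h2 := hg₂ v
  have : ⟪a • g₁ + b • g₂, v - w⟫ = a * ⟪g₁, v - w⟫ + b * ⟪g₂, v - w⟫ := by
    rw [inner_add_left, real_inner_smul_left, real_inner_smul_left]
  rw [this]
  have hc1 : a * (f w + ⟪g₁, v - w⟫) ≤ a * f v := mul_le_mul_of_nonneg_left h1 ha
  have hc2 : b * (f w + ⟪g₂, v - w⟫) ≤ b * f v := mul_le_mul_of_nonneg_left h2 hb
  have h3 : a * f w + b * f w = f w := by rw [← add_mul, hab, one_mul]
  have h4 : a * f v + b * f v = f v := by rw [← add_mul, hab, one_mul]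
  nlinarith [hc1, hc2, h3, h4]

lemma subdiff_isClosed (f : EuclideanSpace ℝ (Fin d) → ℝ) (w : EuclideanSpace ℝ (Fin d)) :
    IsClosed (subdiff f w) := by
  have : subdiff f w = ⋂ v, {g : EuclideanSpace ℝ (Fin d) | f w + ⟪g, v - w⟫ ≤ f v} := by
    ext g
    exact ⟨fun h => Set.mem_iInter.mpr h, fun h v => Set.mem_iInter.mp h v⟩
  rw [this]
  refine isClosed_iInter fun v => isClosed_le ?_ continuous_const
  exact continuous_const.add (continuous_id.inner continuous_const)

lemma subdiff_isCompact {f : EuclideanSpace ℝ (Fin d) → ℝ} (hf : ConvexOn ℝ Set.univ f)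
    (w : EuclideanSpace ℝ (Fin d)) :
    IsCompact (subdiff f w) := by
  obtain ⟨x₀, _, hx₀'⟩ := (isCompact_closedBall w 1).exists_isMaxOn
    ⟨w, Metric.mem_closedBall_self zero_le_one⟩
    ((convexOn_continuous hf).continuousOn)
  have hx₀ : ∀ y ∈ Metric.closedBall w 1, f y ≤ f x₀ := fun y hy => hx₀' hy
  have hbdd : subdiff f w ⊆ Metric.closedBall 0 (f x₀ - f w) := by
    intro g hg
    rw [Metric.mem_closedBall, dist_zero_right]
    rcases eq_or_ne g 0 with rfl | hg0
    · simp only [norm_zero, sub_nonneg]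
      exact hx₀ w (Metric.mem_closedBall_self zero_le_one)
    · have hv : w + ‖g‖⁻¹ • g ∈ Metric.closedBall w 1 := by
        rw [Metric.mem_closedBall, dist_self_add_left, norm_smul, norm_inv, norm_norm,
          inv_mul_cancel₀ (norm_ne_zero_iff.mpr hg0)]
      have h := hg (w + ‖g‖⁻¹ • g)
      rw [add_sub_cancel_left, real_inner_smul_right, real_inner_self_eq_norm_sq] at h
      have h2 := hx₀ _ hv
      have hgn : (0:ℝ) < ‖g‖ := norm_pos_iff.mpr hg0
      have : ‖g‖⁻¹ * ‖g‖ ^ 2 = ‖g‖ := by field_simp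
      nlinarith
  exact (Metric.isBounded_closedBall.subset hbdd).isCompact_closure.of_isClosed_subset
    (subdiff_isClosed f w) subset_closure

/-! ### Rearrangement facts for the spectral risk -/

lemma perm_sum_le_spectralRisk {σ : Fin n → ℝ} {ℓ : Fin n → EuclideanSpace ℝ (Fin d) → ℝ}
    (hσ_mono : Monotone σ) (π : Equiv.Perm (Fin n)) (v : EuclideanSpace ℝ (Fin d)) :
    ∑ i, σ i * ℓ (π i) v ≤ spectralRisk σ ℓ v := by
  set s := Tuple.sort (fun j => ℓ j v) with hs
  set a : Fin n → ℝ := fun i => ℓ (s i) v with ha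
  have hamono : Monotone a := Tuple.monotone_sort (fun j => ℓ j v)
  have hmv : Monovary σ a := hσ_mono.monovary hamono
  have key := hmv.sum_smul_comp_perm_le_sum_smul (σ := π.trans s.symm)
  simp only [smul_eq_mul] at key
  calc ∑ i, σ i * ℓ (π i) v = ∑ i, σ i * a ((π.trans s.symm) i) := by
        refine Finset.sum_congr rfl fun i _ => ?_
        simp [ha, Equiv.trans_apply]
  _ ≤ ∑ i, σ i * a i := key
  _ = spectralRisk σ ℓ v := rfl

lemma argsort_sum_eq_spectralRisk {σ : Fin n → ℝ} {ℓ : Fin n → EuclideanSpace ℝ (Fin d) → ℝ}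
    {π : Equiv.Perm (Fin n)} {v : EuclideanSpace ℝ (Fin d)}
    (hπ : π ∈ argsortSet ℓ v) : ∑ i, σ i * ℓ (π i) v = spectralRisk σ ℓ v := by
  have h := (Tuple.comp_sort_eq_comp_iff_monotone (f := fun j => ℓ j v) (σ := π)).mpr hπ
  refine Finset.sum_congr rfl fun i _ => ?_
  have := congrFun h i
  simp only [Function.comp_apply] at this
  rw [this]

lemma spectralRisk_convexOn {σ : Fin n → ℝ} {ℓ : Fin n → EuclideanSpace ℝ (Fin d) → ℝ}
    (hconv : ∀ i, ConvexOn ℝ Set.univ (ℓ i))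
    (hσ_nonneg : ∀ i, 0 ≤ σ i) (hσ_mono : Monotone σ) :
    ConvexOn ℝ Set.univ (spectralRisk σ ℓ) := by
  refine ⟨convex_univ, fun x _ y _ a b ha hb hab => ?_⟩
  set z := a • x + b • y with hz
  set ρ := Tuple.sort (fun j => ℓ j z) with hρ
  have h1 : spectralRisk σ ℓ z = ∑ i, σ i * ℓ (ρ i) z := rfl
  calc spectralRisk σ ℓ z = ∑ i, σ i * ℓ (ρ i) z := h1
  _ ≤ ∑ i, σ i * (a * ℓ (ρ i) x + b * ℓ (ρ i) y) := by
      refine Finset.sum_le_sum fun i _ => mul_le_mul_of_nonneg_left ?_ (hσ_nonneg i)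
      have := (hconv (ρ i)).2 (Set.mem_univ x) (Set.mem_univ y) ha hb hab
      simpa [smul_eq_mul] using this
  _ = a * ∑ i, σ i * ℓ (ρ i) x + b * ∑ i, σ i * ℓ (ρ i) y := by
      rw [Finset.mul_sum, Finset.mul_sum, ← Finset.sum_add_distrib]
      exact Finset.sum_congr rfl fun i _ => by ring
  _ ≤ a * spectralRisk σ ℓ x + b * spectralRisk σ ℓ y := by
      have hx := perm_sum_le_spectralRisk (ℓ := ℓ) hσ_mono ρ x
      have hy := perm_sum_le_spectralRisk (ℓ := ℓ) hσ_mono ρ y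
      try simp only [smul_eq_mul]
      linarith [mul_le_mul_of_nonneg_left hx ha, mul_le_mul_of_nonneg_left hy hb]

lemma spectralRisk_lipschitz {σ : Fin n → ℝ} {ℓ : Fin n → EuclideanSpace ℝ (Fin d) → ℝ}
    (hσ_nonneg : ∀ i, 0 ≤ σ i) (hσ_mono : Monotone σ)
    (hσ_sum : ∑ i, σ i = 1) {G : ℝ≥0} (hG : ∀ i, LipschitzWith G (ℓ i)) :
    LipschitzWith G (spectralRisk σ ℓ) := by
  refine LipschitzWith.of_dist_le_mul fun x y => ?_
  have key : ∀ x y : EuclideanSpace ℝ (Fin d),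
      spectralRisk σ ℓ x - spectralRisk σ ℓ y ≤ G * dist x y := by
    intro x y
    set ρ := Tuple.sort (fun j => ℓ j x) with hρ
    have h1 : spectralRisk σ ℓ x = ∑ i, σ i * ℓ (ρ i) x := rfl
    have h2 := perm_sum_le_spectralRisk (ℓ := ℓ) hσ_mono ρ y
    have h3 : ∑ i, σ i * ℓ (ρ i) x - ∑ i, σ i * ℓ (ρ i) y ≤ G * dist x y := by
      rw [← Finset.sum_sub_distrib]
      calc ∑ i, (σ i * ℓ (ρ i) x - σ i * ℓ (ρ i) y) = ∑ i, σ i * (ℓ (ρ i) x - ℓ (ρ i) y) :=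
            Finset.sum_congr rfl fun i _ => by ring
      _ ≤ ∑ i, σ i * (G * dist x y) := by
          refine Finset.sum_le_sum fun i _ => mul_le_mul_of_nonneg_left ?_ (hσ_nonneg i)
          have := (hG (ρ i)).dist_le_mul x y
          rw [Real.dist_eq] at this
          exact le_trans (le_abs_self _) this
      _ = G * dist x y := by rw [← Finset.sum_mul, hσ_sum, one_mul]
    linarith [h1 ▸ h3, h2]
  rw [Real.dist_eq, abs_sub_le_iff]
  refine ⟨key x y, ?_⟩
  have := key y x
  rwa [dist_comm] at this

/-! ### Minkowski sums of subdifferentials -/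

/-- The Minkowski sum `∑ᵢ σᵢ ∂ℓ_{π(i)}(w)`. -/
def mink (σ : Fin n → ℝ) (ℓ : Fin n → EuclideanSpace ℝ (Fin d) → ℝ)
    (w : EuclideanSpace ℝ (Fin d)) (π : Equiv.Perm (Fin n)) : Set (EuclideanSpace ℝ (Fin d)) :=
  {g | ∃ gs : Fin n → EuclideanSpace ℝ (Fin d),
    (∀ i, gs i ∈ subdiff (ℓ (π i)) w) ∧ g = ∑ i, σ i • gs i}

lemma mink_nonempty {σ : Fin n → ℝ} {ℓ : Fin n → EuclideanSpace ℝ (Fin d) → ℝ}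
    {w : EuclideanSpace ℝ (Fin d)}
    (hconv : ∀ i, ConvexOn ℝ Set.univ (ℓ i)) (π : Equiv.Perm (Fin n)) :
    (mink σ ℓ w π).Nonempty := by
  choose gs hgs using fun i => subdiff_nonempty (hconv (π i)) w
  exact ⟨∑ i, σ i • gs i, gs, hgs, rfl⟩

lemma mink_convex {σ : Fin n → ℝ} {ℓ : Fin n → EuclideanSpace ℝ (Fin d) → ℝ}
    {w : EuclideanSpace ℝ (Fin d)} (π : Equiv.Perm (Fin n)) : Convex ℝ (mink σ ℓ w π) := by
  rintro g₁ ⟨gs₁, hgs₁, rfl⟩ g₂ ⟨gs₂, hgs₂, rfl⟩ a b ha hb hab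
  refine ⟨fun i => a • gs₁ i + b • gs₂ i,
    fun i => subdiff_convex _ _ (hgs₁ i) (hgs₂ i) ha hb hab, ?_⟩
  rw [Finset.smul_sum, Finset.smul_sum, ← Finset.sum_add_distrib]
  refine Finset.sum_congr rfl fun i _ => ?_
  module

lemma mink_isCompact {σ : Fin n → ℝ} {ℓ : Fin n → EuclideanSpace ℝ (Fin d) → ℝ}
    {w : EuclideanSpace ℝ (Fin d)}
    (hconv : ∀ i, ConvexOn ℝ Set.univ (ℓ i)) (π : Equiv.Perm (Fin n)) :
    IsCompact (mink σ ℓ w π) := by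
  have himg : mink σ ℓ w π =
      (fun gs : Fin n → EuclideanSpace ℝ (Fin d) => ∑ i, σ i • gs i) ''
        (Set.univ.pi fun i => subdiff (ℓ (π i)) w) := by
    ext g
    constructor
    · rintro ⟨gs, hgs, rfl⟩
      exact ⟨gs, fun i _ => hgs i, rfl⟩
    · rintro ⟨gs, hgs, rfl⟩
      exact ⟨gs, fun i => hgs i (Set.mem_univ i), rfl⟩
  rw [himg]
  exact (isCompact_univ_pi fun i => subdiff_isCompact (hconv (π i)) w).image
    (continuous_finset_sum _ fun i _ => (continuous_apply i).const_smul (σ i))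

/-! ### Compactness of convex hulls of finite unions of convex compacts -/

lemma isCompact_convexJoin {s t : Set (EuclideanSpace ℝ (Fin d))}
    (hs : IsCompact s) (ht : IsCompact t) :
    IsCompact (convexJoin ℝ s t) := by
  rcases s.eq_empty_or_nonempty with rfl | hsne
  · simp [convexJoin_empty_left]
  rcases t.eq_empty_or_nonempty with rfl | htne
  · simp [convexJoin_empty_right]
  have himg : convexJoin ℝ s t =
      (fun p : ℝ × (EuclideanSpace ℝ (Fin d)) × (EuclideanSpace ℝ (Fin d)) =>
        p.1 • p.2.1 + (1 - p.1) • p.2.2) '' ((Set.Icc (0:ℝ) 1) ×ˢ s ×ˢ t) := by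
    ext x
    constructor
    · rw [mem_convexJoin]
      rintro ⟨a, haS, b, hbT, p, q, hp, hq, hpq, rfl⟩
      exact ⟨(p, a, b), ⟨⟨hp, by linarith⟩, haS, hbT⟩, by simp [show 1 - p = q by linarith]⟩
    · rintro ⟨⟨c, a, b⟩, ⟨⟨hc0, hc1⟩, haS, hbT⟩, rfl⟩
      rw [mem_convexJoin]
      exact ⟨a, haS, b, hbT, c, 1 - c, hc0, by linarith, by ring, rfl⟩
  rw [himg]
  exact ((isCompact_Icc).prod (hs.prod ht)).image (by fun_prop)

lemma isCompact_convexHull_biUnion {ι : Type*} [DecidableEq ι] (s : Finset ι)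
    (K : ι → Set (EuclideanSpace ℝ (Fin d))) (hconv : ∀ i, Convex ℝ (K i))
    (hcomp : ∀ i, IsCompact (K i)) (hne : ∀ i, (K i).Nonempty) :
    IsCompact (convexHull ℝ (⋃ i ∈ s, K i)) := by
  induction s using Finset.induction_on with
  | empty => simp
  | @insert a s _ ih =>
    rw [Finset.set_biUnion_insert]
    rcases s.eq_empty_or_nonempty with rfl | hsne
    · simp [(hconv a).convexHull_eq, hcomp a]
    · obtain ⟨j, hj⟩ := hsne
      have hUne : (⋃ i ∈ s, K i).Nonempty :=
        ⟨(hne j).choose, Set.mem_biUnion hj (hne j).choose_spec⟩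
      rw [convexHull_union ((hne a).mono (by rfl)) hUne, (hconv a).convexHull_eq]
      exact isCompact_convexJoin (hcomp a) ih

/-! ### The key directional-derivative bound for the spectral risk -/

lemma exists_argsort_dder_le {σ : Fin n → ℝ} {ℓ : Fin n → EuclideanSpace ℝ (Fin d) → ℝ}
    (hconv : ∀ i, ConvexOn ℝ Set.univ (ℓ i)) (hσ_nonneg : ∀ i, 0 ≤ σ i)
    (hσ_sum : ∑ i, σ i = 1) (hR : ConvexOn ℝ Set.univ (spectralRisk σ ℓ))
    (w u : EuclideanSpace ℝ (Fin d)) :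
    ∃ π ∈ argsortSet ℓ w, dder (spectralRisk σ ℓ) w u ≤ ∑ i, σ i * dder (ℓ (π i)) w u := by
  have hn : n ≠ 0 := by
    rintro rfl
    simp at hσ_sum
  haveI : Nonempty (Fin n) := ⟨⟨0, Nat.pos_of_ne_zero hn⟩⟩
  set t : ℕ → ℝ := fun k => ((k : ℝ) + 1)⁻¹ with ht_def
  have ht_pos : ∀ k, 0 < t k := fun k => by positivity
  set πs : ℕ → Equiv.Perm (Fin n) := fun k => Tuple.sort (fun j => ℓ j (w + t k • u)) with hπs
  obtain ⟨π, hπinf⟩ := Finite.exists_infinite_fiber πs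
  rw [Set.infinite_coe_iff] at hπinf
  set S : Set ℕ := πs ⁻¹' {π} with hS_def
  have hS : S.Infinite := hπinf
  have hmemS : ∀ k ∈ S, πs k = π := fun k hk => hk
  have hsmall : ∀ s : ℝ, 0 < s → ∃ k ∈ S, t k ≤ s := by
    intro s hs
    obtain ⟨k, hkS, hk⟩ := hS.exists_gt ⌈s⁻¹⌉₊
    refine ⟨k, hkS, ?_⟩
    have h1 : s⁻¹ ≤ (k : ℝ) + 1 := by
      calc s⁻¹ ≤ (⌈s⁻¹⌉₊ : ℝ) := Nat.le_ceil _
      _ ≤ (k : ℝ) := by exact_mod_cast hk.le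
      _ ≤ (k : ℝ) + 1 := by linarith
    rw [ht_def]
    calc ((k:ℝ)+1)⁻¹ ≤ (s⁻¹)⁻¹ := by
          apply inv_anti₀ (by positivity) h1
    _ = s := inv_inv s
  have hsorted : ∀ k ∈ S, Monotone fun i => ℓ (π i) (w + t k • u) := by
    intro k hk
    have := Tuple.monotone_sort (fun j => ℓ j (w + t k • u))
    rw [show Tuple.sort (fun j => ℓ j (w + t k • u)) = π from hmemS k hk] at this
    exact this
  have hSset : {x | x ∈ S}.Infinite := hS
  set e : ℕ → ℕ := Nat.nth (· ∈ S) with he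
  have heS : ∀ m, e m ∈ S := fun m => Nat.nth_mem_of_infinite hSset m
  have hemono : StrictMono e := Nat.nth_strictMono hSset
  have hetop : Filter.Tendsto e Filter.atTop Filter.atTop := hemono.tendsto_atTop
  have htlim : Filter.Tendsto (fun m => t (e m)) Filter.atTop (nhds 0) := by
    have h1 : Filter.Tendsto (fun k : ℕ => ((k : ℝ) + 1)⁻¹) Filter.atTop (nhds 0) := by
      simpa [one_div] using tendsto_one_div_add_atTop_nhds_zero_nat (𝕜 := ℝ)
    exact h1.comp hetop
  have hxlim : Filter.Tendsto (fun m => w + t (e m) • u) Filter.atTop (nhds w) := by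
    have := (htlim.smul_const u).const_add w
    simpa using this
  have hπargsort : π ∈ argsortSet ℓ w := by
    intro i j hij
    have h1 : ∀ m : ℕ, ℓ (π i) (w + t (e m) • u) ≤ ℓ (π j) (w + t (e m) • u) :=
      fun m => hsorted (e m) (heS m) hij
    exact le_of_tendsto_of_tendsto'
      (((convexOn_continuous (hconv (π i))).tendsto w).comp hxlim)
      (((convexOn_continuous (hconv (π j))).tendsto w).comp hxlim) h1
  refine ⟨π, hπargsort, ?_⟩
  have hRk : ∀ k ∈ S, spectralRisk σ ℓ (w + t k • u) = ∑ i, σ i * ℓ (π i) (w + t k • u) := by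
    intro k hk
    rw [spectralRisk]
    rw [show Tuple.sort (fun j => ℓ j (w + t k • u)) = π from hmemS k hk]
  have hRw : spectralRisk σ ℓ w = ∑ i, σ i * ℓ (π i) w :=
    (argsort_sum_eq_spectralRisk hπargsort).symm
  have hslp : ∀ k ∈ S, slp (spectralRisk σ ℓ) w u (t k) = ∑ i, σ i * slp (ℓ (π i)) w u (t k) := by
    intro k hk
    rw [slp, hRk k hk, hRw, ← Finset.sum_sub_distrib, Finset.sum_div]
    refine Finset.sum_congr rfl fun i _ => ?_
    rw [slp]
    ring
  apply le_of_forall_pos_le_add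
  intro ε hε
  choose s hs_pos hs_lt using fun i : Fin n => exists_slp_lt (ℓ (π i)) w u hε
  set s₀ := Finset.univ.inf' Finset.univ_nonempty s with hs₀
  have hs₀pos : 0 < s₀ := by
    rw [hs₀, Finset.lt_inf'_iff]
    exact fun i _ => hs_pos i
  obtain ⟨k, hkS, hk⟩ := hsmall s₀ hs₀pos
  calc dder (spectralRisk σ ℓ) w u ≤ slp (spectralRisk σ ℓ) w u (t k) :=
        dder_le_slp hR w u (ht_pos k)
  _ = ∑ i, σ i * slp (ℓ (π i)) w u (t k) := hslp k hkS
  _ ≤ ∑ i, σ i * (dder (ℓ (π i)) w u + ε) := by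
      refine Finset.sum_le_sum fun i _ => mul_le_mul_of_nonneg_left ?_ (hσ_nonneg i)
      have hmono := slp_mono (hconv (π i)) w u (ht_pos k)
        (hk.trans (Finset.inf'_le s (Finset.mem_univ i)))
      exact hmono.trans (hs_lt i).le
  _ = ∑ i, σ i * dder (ℓ (π i)) w u + ε := by
      rw [Finset.sum_congr rfl fun i _ => mul_add (σ i) _ ε, Finset.sum_add_distrib,
        ← Finset.sum_mul, hσ_sum, one_mul]

end SpectralAux

/-- For convex losses and non-decreasing non-negative weights summing to one,
the spectral risk is convex, its subdifferential is the convex hull of the Minkowski sums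
`∑ᵢ σᵢ ∂ℓ_{π(i)}(w)` over sorting permutations `π`, and it is `G`-Lipschitz whenever each
loss is `G`-Lipschitz. -/
theorem stmt5 {d n : ℕ} (ℓ : Fin n → EuclideanSpace ℝ (Fin d) → ℝ)
    (hconv : ∀ i, ConvexOn ℝ Set.univ (ℓ i))
    (σ : Fin n → ℝ) (hσ_nonneg : ∀ i, 0 ≤ σ i) (hσ_mono : Monotone σ)
    (hσ_sum : ∑ i, σ i = 1) (G : ℝ≥0) :
    ConvexOn ℝ Set.univ (spectralRisk σ ℓ) ∧
    (∀ w, subdiff (spectralRisk σ ℓ) w =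
      convexHull ℝ (⋃ π ∈ argsortSet ℓ w,
        {g | ∃ gs : Fin n → EuclideanSpace ℝ (Fin d),
          (∀ i, gs i ∈ subdiff (ℓ (π i)) w) ∧ g = ∑ i, σ i • gs i})) ∧
    ((∀ i, LipschitzWith G (ℓ i)) → LipschitzWith G (spectralRisk σ ℓ)) := by
  classical
  have hR : ConvexOn ℝ Set.univ (spectralRisk σ ℓ) :=
    spectralRisk_convexOn hconv hσ_nonneg hσ_mono
  refine ⟨hR, fun w => ?_, spectralRisk_lipschitz hσ_nonneg hσ_mono hσ_sum⟩
  show subdiff (spectralRisk σ ℓ) w = convexHull ℝ (⋃ π ∈ argsortSet ℓ w, mink σ ℓ w π)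
  apply Set.Subset.antisymm
  · -- subdifferential is contained in the convex hull
    intro g hg
    by_contra hgC
    have hA : (⋃ π ∈ argsortSet ℓ w, mink σ ℓ w π) =
        ⋃ π ∈ ((argsortSet ℓ w).toFinite.toFinset), mink σ ℓ w π := by
      ext x; simp [Set.Finite.mem_toFinset, argsortSet]
    have hCcomp : IsCompact (convexHull ℝ (⋃ π ∈ argsortSet ℓ w, mink σ ℓ w π)) := by
      rw [hA]
      exact isCompact_convexHull_biUnion _ _ (fun π => mink_convex π)
        (fun π => mink_isCompact hconv π) (fun π => mink_nonempty hconv π)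
    obtain ⟨fl, c, hfl, hcg⟩ := geometric_hahn_banach_closed_point
      (convex_convexHull ℝ _) hCcomp.isClosed hgC
    set u := (InnerProductSpace.toDual ℝ (EuclideanSpace ℝ (Fin d))).symm fl with hu_def
    have hu : ∀ x, ⟪u, x⟫ = fl x := fun x => InnerProductSpace.toDual_symm_apply
    obtain ⟨π, hπ, h2⟩ := exists_argsort_dder_le hconv hσ_nonneg hσ_sum hR w u
    choose gs hgs hgseq using fun i => exists_subdiff_inner_eq (hconv (π i)) w u
    have hmem : (∑ i, σ i • gs i) ∈ ⋃ π ∈ argsortSet ℓ w, mink σ ℓ w π :=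
      Set.mem_biUnion hπ ⟨gs, hgs, rfl⟩
    have hlt := hfl _ (subset_convexHull ℝ _ hmem)
    have heq : fl (∑ i, σ i • gs i) = ∑ i, σ i * dder (ℓ (π i)) w u := by
      rw [← hu, inner_sum]
      refine Finset.sum_congr rfl fun i _ => ?_
      rw [real_inner_smul_right, real_inner_comm, hgseq i]
    have h1 : ⟪g, u⟫ ≤ dder (spectralRisk σ ℓ) w u := inner_le_dder hg u
    have h3 : fl g = ⟪g, u⟫ := by rw [← hu, real_inner_comm]
    rw [heq] at hlt
    linarith
  · -- the convex hull is contained in the subdifferential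
    apply convexHull_min _ (subdiff_convex _ w)
    intro g hg
    rw [Set.mem_iUnion₂] at hg
    obtain ⟨π, hπ, gs, hgs, rfl⟩ := hg
    intro v
    have hinner : ⟪∑ i, σ i • gs i, v - w⟫ = ∑ i, σ i * ⟪gs i, v - w⟫ := by
      rw [sum_inner]
      exact Finset.sum_congr rfl fun i _ => real_inner_smul_left _ _ _
    rw [hinner, ← argsort_sum_eq_spectralRisk (σ := σ) hπ]
    calc ∑ i, σ i * ℓ (π i) w + ∑ i, σ i * ⟪gs i, v - w⟫
        = ∑ i, σ i * (ℓ (π i) w + ⟪gs i, v - w⟫) := by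
          rw [← Finset.sum_add_distrib]
          exact Finset.sum_congr rfl fun i _ => by ring
      _ ≤ ∑ i, σ i * ℓ (π i) v :=
          Finset.sum_le_sum fun i _ => mul_le_mul_of_nonneg_left (hgs i v) (hσ_nonneg i)
      _ ≤ spectralRisk σ ℓ v := perm_sum_le_spectralRisk hσ_mono π v
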